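/- Let E be an oriented n-dimensional real inner product space, k > 0, p > 1, k + p < n − 1, and {v_1, …, v_k, w_1, …, w_p} linearly independent. For each i ∈ {1,…,p} and each b ∈ {1,…,k}, the vector Θ_i = ⋆[ (⋀_{j≠i} w_j) ∧ (⋀_{l=1}^k v_l) ∧ ⋆( (⋀_{j=1}^p w_j) ∧ (⋀_{l=1}^k v_l) ) ] satisfies ⟨Θ_i, v_b⟩ = 0. -/

import Mathlib

noncomputable section

open ExteriorAlgebra Module

/-- The data of the induced inner products on the exterior powers of an oriented
`n`-dimensional real inner product space `E`, together with the Hodge star operators,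
characterized by their defining properties. -/
structure HodgeData (E : Type*) [NormedAddCommGroup E] [InnerProductSpace ℝ E] (n : ℕ) where
  /-- an orthonormal basis fixing the orientation -/
  e : OrthonormalBasis (Fin n) ℝ E
  /-- the induced inner product on the exterior algebra (degreewise, the inner product
  `⟨·,·⟩_p` on `Λ^p E`) -/
  B : ExteriorAlgebra ℝ E →ₗ[ℝ] ExteriorAlgebra ℝ E →ₗ[ℝ] ℝ
  B_symm : ∀ x y, B x y = B y x
  /-- on decomposable `p`-vectors, the inner product is the Gram determinant -/
  B_gram : ∀ (p : ℕ) (v w : Fin p → E),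
    B (ExteriorAlgebra.ιMulti ℝ p v) (ExteriorAlgebra.ιMulti ℝ p w)
      = (Matrix.of fun i j => (inner ℝ (v i) (w j) : ℝ)).det
  /-- the Hodge star operator `⋆ : Λ^p E → Λ^{n-p} E` (for each `p`) -/
  star : ℕ → ExteriorAlgebra ℝ E →ₗ[ℝ] ExteriorAlgebra ℝ E
  star_mem : ∀ (p : ℕ) (ν : ExteriorAlgebra ℝ E), ν ∈ ⋀[ℝ]^p E →
    star p ν ∈ ⋀[ℝ]^(n - p) E
  /-- the defining property of the Hodge star: `⟨⋆ν, ω⟩ μ = ν ∧ ω` where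
  `μ = e_1 ∧ ⋯ ∧ e_n` is the unit volume element -/
  star_eq : ∀ (p : ℕ) (ν ω : ExteriorAlgebra ℝ E), ν ∈ ⋀[ℝ]^p E → ω ∈ ⋀[ℝ]^(n - p) E →
    (B (star p ν) ω) • (ExteriorAlgebra.ιMulti ℝ n ⇑e) = ν * ω

namespace HodgeData

variable {E : Type*} [NormedAddCommGroup E] [InnerProductSpace ℝ E] {n : ℕ}

/-- the unit volume element `μ = e_1 ∧ ⋯ ∧ e_n` -/
def vol (H : HodgeData E n) : ExteriorAlgebra ℝ E := ExteriorAlgebra.ιMulti ℝ n ⇑H.e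

/-- the norm on the exterior powers induced by the inner product -/
def norm (H : HodgeData E n) (x : ExteriorAlgebra ℝ E) : ℝ := Real.sqrt (H.B x x)

end HodgeData

section AuxLemmas

open ExteriorAlgebra

variable {E : Type*} [NormedAddCommGroup E] [InnerProductSpace ℝ E]

open ExteriorAlgebra Module

variable {E : Type*} [NormedAddCommGroup E] [InnerProductSpace ℝ E]

lemma list_comm (l : List E) (y : E) :
    ι ℝ y * (l.map (ι ℝ)).prod = ((-1:ℝ)^l.length) • ((l.map (ι ℝ)).prod * ι ℝ y) := by
  induction l with
  | nil => simp
  | cons a l ih =>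
    have h1 : ι ℝ y * ι ℝ a = - (ι ℝ a * ι ℝ y) :=
      eq_neg_of_add_eq_zero_left (ExteriorAlgebra.ι_add_mul_swap y a)
    simp only [List.map_cons, List.prod_cons, List.length_cons]
    rw [← mul_assoc, h1, neg_mul, mul_assoc, ih, mul_smul_comm, pow_succ, mul_smul,
      neg_one_smul, mul_assoc, smul_neg]

lemma ι_comm_of_mem (m : ℕ) (x : ExteriorAlgebra ℝ E) (hx : x ∈ ⋀[ℝ]^m E) (y : E) :
    ι ℝ y * x = ((-1:ℝ)^m) • (x * ι ℝ y) := by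
  rw [← ExteriorAlgebra.ιMulti_span_fixedDegree] at hx
  induction hx using Submodule.span_induction with
  | mem z hz =>
    obtain ⟨f, rfl⟩ := hz
    have := list_comm (List.ofFn f) y
    simpa [ExteriorAlgebra.ιMulti_apply, List.map_ofFn, Function.comp_def] using this
  | zero => simp
  | add a b _ _ iha ihb => rw [mul_add, iha, ihb, add_mul, smul_add]
  | smul c a _ iha =>
    rw [mul_smul_comm, iha, smul_comm, smul_mul_assoc]

lemma ιMulti_snoc (p : ℕ) (u : Fin p → E) (y : E) :
    ιMulti ℝ (p+1) (Fin.snoc u y) = ιMulti ℝ p u * ι ℝ y := by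
  rw [ExteriorAlgebra.ιMulti_apply, ExteriorAlgebra.ιMulti_apply, List.ofFn_succ']
  simp [Fin.snoc_castSucc, List.concat_eq_append]

lemma ι_mem_one (y : E) : ι ℝ y ∈ ⋀[ℝ]^1 E := by
  have : ι ℝ y = ιMulti ℝ 1 (fun _ => y) := by
    simp [ExteriorAlgebra.ιMulti_apply]
  rw [this]
  exact ExteriorAlgebra.ιMulti_range ℝ 1 ⟨_, rfl⟩


end AuxLemmas

/-- ⟨Θ_i, v_b⟩ = 0 for every i and b. -/
theorem stmt11 {E : Type*} [NormedAddCommGroup E] [InnerProductSpace ℝ E] (n k q : ℕ)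
    (hk : 0 < k) (hn : k + q + 3 < n) (H : HodgeData E n)
    (v : Fin k → E) (w : Fin (q + 2) → E)
    (hindep : LinearIndependent ℝ (Fin.append v w))
    (W : ExteriorAlgebra ℝ E)
    (hW : W = ExteriorAlgebra.ιMulti ℝ (q + 2 + k) (Fin.append w v))
    (Θ : Fin (q + 2) → ExteriorAlgebra ℝ E)
    (hΘ : ∀ i, Θ i = H.star (n - 1)
      (ExteriorAlgebra.ιMulti ℝ (q + 1 + k)
          (Fin.append (fun j => w (i.succAbove j)) v) * H.star (q + 2 + k) W)) :
    ∀ i b, H.B (Θ i) (ExteriorAlgebra.ι ℝ (v b)) = 0 := by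
  intro i b
  have hWmem : W ∈ ⋀[ℝ]^(q+2+k) E := by
    rw [hW]; exact ExteriorAlgebra.ιMulti_range ℝ _ ⟨_, rfl⟩
  have hS : H.star (q+2+k) W ∈ ⋀[ℝ]^(n-(q+2+k)) E := H.star_mem _ _ hWmem
  set A := ExteriorAlgebra.ιMulti ℝ (q + 1 + k)
    (Fin.append (fun j => w (i.succAbove j)) v) with hA
  have hAmem : A ∈ ⋀[ℝ]^(q+1+k) E := ExteriorAlgebra.ιMulti_range ℝ _ ⟨_, rfl⟩
  have hν : A * H.star (q+2+k) W ∈ ⋀[ℝ]^(n-1) E := by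
    have h2 := SetLike.mul_mem_graded hAmem hS
    convert h2 using 2
    omega
  have hι : ExteriorAlgebra.ι ℝ (v b) ∈ ⋀[ℝ]^(n-(n-1)) E := by
    have h1 : n - (n-1) = 1 := by omega
    rw [h1]; exact ι_mem_one _
  have key := H.star_eq (n-1) _ _ hν hι
  have hz2 : A * ExteriorAlgebra.ι ℝ (v b) = 0 := by
    rw [hA, ← ιMulti_snoc]
    apply AlternatingMap.map_eq_zero_of_eq _ _
      (i := Fin.castSucc (Fin.natAdd (q+1) b)) (j := Fin.last _)
    · simp only [Fin.snoc_castSucc, Fin.snoc_last, Fin.append_right]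
    · exact (Fin.castSucc_lt_last _).ne
  have hc := ι_comm_of_mem (n-(q+2+k)) _ hS (v b)
  have hc' : H.star (q+2+k) W * ExteriorAlgebra.ι ℝ (v b)
      = ((-1:ℝ)^(n-(q+2+k))) • (ExteriorAlgebra.ι ℝ (v b) * H.star (q+2+k) W) := by
    rw [hc, smul_smul, ← pow_add, Even.neg_one_pow (Even.add_self _), one_smul]
  have hz : A * H.star (q+2+k) W * ExteriorAlgebra.ι ℝ (v b) = 0 := by
    rw [mul_assoc, hc', mul_smul_comm, ← mul_assoc, hz2, zero_mul, smul_zero]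
  rw [hz] at key
  have hvol : H.B (ExteriorAlgebra.ιMulti ℝ n ⇑H.e) (ExteriorAlgebra.ιMulti ℝ n ⇑H.e) = 1 := by
    rw [H.B_gram]
    have h1 : (Matrix.of fun i j => (inner ℝ (H.e i) (H.e j) : ℝ)) = 1 := by
      ext i j
      simpa [Matrix.one_apply] using orthonormal_iff_ite.mp H.e.orthonormal i j
    rw [h1, Matrix.det_one]
  have hfin := congrArg (fun x => H.B x (ExteriorAlgebra.ιMulti ℝ n ⇑H.e)) key
  simp only [map_smul, LinearMap.smul_apply, map_zero, LinearMap.zero_apply, hvol,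
    smul_eq_mul, mul_one] at hfin
  rw [hΘ i]
  exact hfin
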